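/- Let a > 0, b ∈ ℝ, and let w be a path of linear growth. Then the stationary-orbit coordinate of the contracting component is invariant under the pathwise solution operator: ψ_{a,b}(t, w, ỹ_{a,b}(w)) = ỹ_{a,b}(θ_t w) for every t ∈ ℝ. -/

import Mathlib

open MeasureTheory Filter Topology

/-- The pathwise solution operator `ψ_{a,b}` of the contracting component
`dY = -aY dt + b dW` of the noisy saddle. -/
noncomputable def psiSol (a b t : ℝ) (w : ℝ → ℝ) (y : ℝ) : ℝ :=
  Real.exp (-a * t) * y + b * w t -
    a * b * Real.exp (-a * t) * ∫ s in (0 : ℝ)..t, Real.exp (a * s) * w s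

/-- The shift `θ_t w` of a path `w`: `(θ_t w)(s) = w(t + s) - w(t)`. -/
def shiftPath (t : ℝ) (w : ℝ → ℝ) : ℝ → ℝ := fun s => w (t + s) - w t

/-- The stationary-orbit coordinate of the contracting component:
`ỹ_{a,b}(w) = -a b ∫_{-∞}^0 e^{a s} w(s) ds`. -/
noncomputable def yStat (a b : ℝ) (w : ℝ → ℝ) : ℝ :=
  -(a * b) * ∫ s in Set.Iio (0 : ℝ), Real.exp (a * s) * w s

section aux
open Set Real

private lemma expMul_hasDerivAt (a : ℝ) (ha : a ≠ 0) (x : ℝ) :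
    HasDerivAt (fun y : ℝ => Real.exp (a * y) / a) (Real.exp (a * x)) x := by
  have h : HasDerivAt (fun y : ℝ => Real.exp (a * y)) (Real.exp (a * x) * a) x := by
    simpa [Function.comp_def] using (Real.hasDerivAt_exp (a * x)).comp x ((hasDerivAt_id x).const_mul a)
  simpa [mul_div_cancel_right₀ _ ha] using h.div_const a

private lemma integrableOn_expMul_Iic {a : ℝ} (ha : 0 < a) (c : ℝ) :
    IntegrableOn (fun s : ℝ => Real.exp (a * s)) (Set.Iic c) := by
  rw [← (Measure.measurePreserving_neg (volume : Measure ℝ)).integrableOn_comp_preimage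
      (Homeomorph.neg ℝ).measurableEmbedding]
  simp only [Function.comp_def, neg_preimage, neg_Iic, mul_neg, ← neg_mul]
  exact Iff.mpr integrableOn_Ici_iff_integrableOn_Ioi (exp_neg_integrableOn_Ioi (-c) ha)

private lemma integral_expMul_Iic_zero {a : ℝ} (ha : 0 < a) :
    ∫ s in Set.Iic (0:ℝ), Real.exp (a * s) = 1 / a := by
  have htend : Tendsto (fun y : ℝ => Real.exp (a * y) / a) atBot (𝓝 0) := by
    have h1 : Tendsto (fun y : ℝ => a * y) atBot atBot := tendsto_id.const_mul_atBot ha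
    have := (Real.tendsto_exp_atBot.comp h1).div_const a
    simpa using this
  have h := integral_Iic_of_hasDerivAt_of_tendsto'
    (fun x (_ : x ∈ Set.Iic (0:ℝ)) => expMul_hasDerivAt a ha.ne' x)
    (integrableOn_expMul_Iic ha 0) htend
  simpa using h

end aux

/-- **Invariance of the contracting stationary-orbit coordinate under the pathwise
solution operator.** For `a > 0`, `b : ℝ` and a path `w` of linear growth,
`ψ_{a,b}(t, w, ỹ_{a,b}(w)) = ỹ_{a,b}(θ_t w)` for every `t : ℝ`. -/
theorem yStat_invariant
    (a : ℝ) (ha : 0 < a) (b : ℝ) (w : ℝ → ℝ)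
    (hw : Continuous w) (hw0 : w 0 = 0)
    (C : ℝ) (hC : 0 ≤ C) (hgrowth : ∀ s : ℝ, |w s| ≤ C * (1 + |s|)) :
    ∀ t : ℝ, psiSol a b t w (yStat a b w) = yStat a b (shiftPath t w) := by
  intro t
  set f : ℝ → ℝ := fun s => Real.exp (a * s) * w s with hfdef
  have hfcont : Continuous f :=
    (Real.continuous_exp.comp (continuous_const.mul continuous_id)).mul hw
  -- integrability of f on Iic 0
  have hbound : ∀ s ∈ Set.Iic (0:ℝ),
      ‖f s‖ ≤ (C * (1 + 2/a)) * Real.exp ((a/2) * s) := by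
    intro s hs
    have hs0 : s ≤ 0 := hs
    have h1 : |w s| ≤ C * (1 + |s|) := hgrowth s
    have habs : |s| = -s := abs_of_nonpos hs0
    have hexp : 1 + (a/2) * (-s) ≤ Real.exp ((a/2) * (-s)) := by
      have := Real.add_one_le_exp ((a/2) * (-s))
      linarith
    have h2 : 1 + |s| ≤ (1 + 2/a) * Real.exp ((a/2) * (-s)) := by
      rw [habs]
      have hkey : 1 + (-s) ≤ (1 + 2/a) * (1 + (a/2) * (-s)) := by
        have hu : 0 ≤ -s := by linarith
        have h2a : 0 < 2/a := by positivity
        have hnn : 0 ≤ (a/2) * (-s) := by positivity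
        have hone : (2/a) * ((a/2) * (-s)) = -s := by field_simp
        have hexpand : (1 + 2/a) * (1 + (a/2) * (-s))
            = 1 + (a/2) * (-s) + 2/a + (2/a) * ((a/2) * (-s)) := by ring
        rw [hexpand, hone]; linarith
      have hpos : (0:ℝ) < 1 + 2/a := by positivity
      calc 1 + (-s) ≤ (1 + 2/a) * (1 + (a/2) * (-s)) := hkey
        _ ≤ (1 + 2/a) * Real.exp ((a/2) * (-s)) := by
            exact mul_le_mul_of_nonneg_left hexp hpos.le
    have hmerge : Real.exp (a * s) * Real.exp ((a/2) * (-s)) = Real.exp ((a/2) * s) := by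
      rw [← Real.exp_add]; ring_nf
    calc ‖f s‖ = Real.exp (a * s) * |w s| := by
          simp [hfdef, abs_mul, abs_of_pos (Real.exp_pos _), Real.norm_eq_abs]
      _ ≤ Real.exp (a * s) * (C * (1 + |s|)) :=
          mul_le_mul_of_nonneg_left h1 (Real.exp_pos _).le
      _ ≤ Real.exp (a * s) * (C * ((1 + 2/a) * Real.exp ((a/2) * (-s)))) := by
          refine mul_le_mul_of_nonneg_left ?_ (Real.exp_pos _).le
          exact mul_le_mul_of_nonneg_left h2 hC
      _ = (C * (1 + 2/a)) * (Real.exp (a * s) * Real.exp ((a/2) * (-s))) := by ring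
      _ = (C * (1 + 2/a)) * Real.exp ((a/2) * s) := by rw [hmerge]
  have hIic0 : IntegrableOn f (Set.Iic (0:ℝ)) := by
    refine Integrable.mono'
      ((integrableOn_expMul_Iic (half_pos ha) 0).const_mul (C * (1 + 2/a)))
      hfcont.aestronglyMeasurable.restrict ?_
    exact (ae_restrict_iff' measurableSet_Iic).mpr (Filter.Eventually.of_forall hbound)
  have hIic : ∀ c : ℝ, IntegrableOn f (Set.Iic c) := by
    intro c
    have h2 : IntegrableOn f (Set.Icc 0 c) := hfcont.integrableOn_Icc
    refine (hIic0.union h2).mono_set ?_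
    intro x hx
    rcases le_or_gt x 0 with h | h
    · exact Or.inl h
    · exact Or.inr ⟨h.le, hx⟩
  -- translation
  have emb : MeasurableEmbedding (fun s : ℝ => t + s) :=
    (Homeomorph.addLeft t).measurableEmbedding
  have hmp : MeasurePreserving (fun s : ℝ => t + s) volume volume :=
    measurePreserving_add_left volume t
  have hpre : (fun s : ℝ => t + s) ⁻¹' Set.Iic t = Set.Iic 0 := by
    ext s; simp
  have htrans : ∫ s in Set.Iic (0:ℝ), f (t + s) = ∫ u in Set.Iic t, f u := by
    have h := hmp.setIntegral_preimage_emb emb f (Set.Iic t)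
    rw [hpre] at h; exact h
  have hshift_int : IntegrableOn (fun s => f (t + s)) (Set.Iic (0:ℝ)) := by
    have h := (hmp.integrableOn_comp_preimage emb (f := f) (s := Set.Iic t)).mpr (hIic t)
    rw [hpre] at h
    simpa [Function.comp_def] using h
  -- split Iic t
  have hsplit : ∫ u in Set.Iic t, f u
      = (∫ u in Set.Iic (0:ℝ), f u) + ∫ s in (0:ℝ)..t, f s := by
    have h := intervalIntegral.integral_Iic_sub_Iic (hIic 0) (hIic t)
    linarith
  -- compute RHS inner integral
  have hIio_Iic : ∀ (g : ℝ → ℝ), ∫ s in Set.Iio (0:ℝ), g s = ∫ s in Set.Iic (0:ℝ), g s :=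
    fun g => (integral_Iic_eq_integral_Iio (f := g)).symm
  have hinner : ∫ s in Set.Iio (0:ℝ), Real.exp (a * s) * (w (t + s) - w t)
      = Real.exp (-a * t) * (∫ u in Set.Iic t, f u) - (1/a) * w t := by
    rw [hIio_Iic]
    have heq : ∀ s : ℝ, Real.exp (a * s) * (w (t + s) - w t)
        = Real.exp (-a * t) * f (t + s) - Real.exp (a * s) * w t := by
      intro s
      have : Real.exp (-a * t) * Real.exp (a * (t + s)) = Real.exp (a * s) := by
        rw [← Real.exp_add]; ring_nf
      simp only [hfdef]
      calc Real.exp (a * s) * (w (t + s) - w t)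
          = (Real.exp (-a * t) * Real.exp (a * (t + s))) * w (t + s)
            - Real.exp (a * s) * w t := by rw [this]; ring
        _ = Real.exp (-a * t) * (Real.exp (a * (t + s)) * w (t + s))
            - Real.exp (a * s) * w t := by ring
    simp_rw [heq]
    rw [integral_sub (hshift_int.const_mul _) ((integrableOn_expMul_Iic ha 0).mul_const _)]
    rw [integral_const_mul, integral_mul_const, htrans, integral_expMul_Iic_zero ha]
  -- assemble
  simp only [psiSol, yStat, shiftPath]
  rw [hinner, hIio_Iic, hsplit]
  have hane : a ≠ 0 := ha.ne'
  field_simp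
  ring
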